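/- There is a function ε : ℕ → ℝ with ε(n) → 0 as n → ∞ such that the following holds for all n and all a, d, i ∈ ℕ with i ≥ 1, a ≤ n, i ≤ a, d + i ≤ n − a, and d + 2i ≤ n^{1/3}: p(n,a,d,i)/p(n,a,d,0) ≤ (1+ε(n))·( e·(2 + d/i)·(1 − a/n) )^i ≤ (1+ε(n))·e^{d+2i}·(1 − a/n)^i. -/

import Mathlib

lemma aux_choose_mul_descFactorial (N s : ℕ) : ∀ k : ℕ,
    N.choose (s + k) * (s + k).descFactorial k = N.choose s * (N - s).descFactorial k := by
  intro k
  induction k with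
  | zero => simp
  | succ k ih =>
    have h1 : s + (k + 1) = (s + k) + 1 := rfl
    rw [h1, Nat.succ_descFactorial_succ, ← Nat.mul_assoc, Nat.choose_succ_right_eq,
      Nat.descFactorial_succ, Nat.mul_assoc, Nat.mul_comm (N - (s + k)), ← Nat.mul_assoc, ih,
      ← Nat.sub_sub, Nat.mul_assoc, Nat.mul_comm ((N - s).descFactorial k)]

lemma aux_descFactorial_pos {k n : ℕ} (h : k ≤ n) : 0 < n.descFactorial k :=
  Nat.pos_of_ne_zero fun h0 => absurd (Nat.descFactorial_eq_zero_iff_lt.1 h0) (not_lt.2 h)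



/-- `p(n,a,d,i) = C(n−a, d+i)·C(a, i)/C(n, d+2i)`: the probability that flipping
`d+2i` positions, chosen uniformly at random, of a bit string of length `n` with
exactly `a` one-bits yields a string with exactly `a+d` one-bits. -/
noncomputable def pflip (n a d i : ℕ) : ℝ :=
  (((n - a).choose (d + i) : ℝ) * (a.choose i : ℝ)) / (n.choose (d + 2 * i) : ℝ)

set_option maxHeartbeats 2000000 in
/-- With `ε(n) → 0`, for all `n, a, d, i` with `i ≥ 1`, `a ≤ n`,
`i ≤ a`, `d + i ≤ n − a` and `d + 2i ≤ n^{1/3}`: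
`p(n,a,d,i)/p(n,a,d,0) ≤ (1+ε(n))·(e(2+d/i)(1−a/n))^i ≤ (1+ε(n))·e^{d+2i}·(1−a/n)^i`. -/
theorem pflip_ratio_le :
    ∃ ε : ℕ → ℝ, Filter.Tendsto ε Filter.atTop (nhds 0) ∧
      ∀ n a d i : ℕ, 1 ≤ i → a ≤ n → i ≤ a → d + i ≤ n - a →
        ((d : ℝ) + 2 * i) ≤ (n : ℝ) ^ ((1 : ℝ) / 3) →
        pflip n a d i / pflip n a d 0 ≤
            (1 + ε n) * (Real.exp 1 * (2 + (d : ℝ) / i) * (1 - (a : ℝ) / n)) ^ i ∧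
          (1 + ε n) * (Real.exp 1 * (2 + (d : ℝ) / i) * (1 - (a : ℝ) / n)) ^ i ≤
            (1 + ε n) * Real.exp 1 ^ (d + 2 * i) * (1 - (a : ℝ) / n) ^ i := by
  refine ⟨fun n => Real.exp ((n : ℝ) ^ (-(1 : ℝ) / 3)) - 1, ?_, ?_⟩
  · have h1 : Filter.Tendsto (fun n : ℕ => (n : ℝ) ^ (-(1 : ℝ) / 3)) Filter.atTop (nhds 0) := by
      have := (tendsto_rpow_neg_atTop (y := (1 : ℝ) / 3) (by norm_num)).comp
        (tendsto_natCast_atTop_atTop (R := ℝ))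
      simpa [Function.comp_def, neg_div] using this
    have h2 := (Real.continuous_exp.continuousAt (x := (0 : ℝ))).tendsto.comp h1
    simpa using h2.sub (tendsto_const_nhds (x := (1 : ℝ)))
  · intro n a d i hi han hia hdi hcube
    have hi0 : (0:ℝ) < i := by exact_mod_cast hi
    have hiR : (1:ℝ) ≤ i := by exact_mod_cast hi
    have hdR : (0:ℝ) ≤ d := Nat.cast_nonneg d
    have hn1 : 1 ≤ n := le_trans hi (le_trans hia han)
    have hnR : (0:ℝ) < n := by exact_mod_cast hn1
    set c : ℝ := (n:ℝ) ^ ((1:ℝ)/3) with hc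
    have hcn : c ≤ (n:ℝ) := by
      calc c ≤ (n:ℝ) ^ (1:ℝ) :=
            Real.rpow_le_rpow_of_exponent_le (by exact_mod_cast hn1) (by norm_num)
        _ = (n:ℝ) := Real.rpow_one _
    have hd2nR : ((d:ℝ) + 2*i) ≤ (n:ℝ) := le_trans hcube hcn
    have hd2n : d + 2*i ≤ n := by exact_mod_cast hd2nR
    have hu2 : (2:ℝ) ≤ (d:ℝ) + 2*i := by linarith
    have hc2 : (2:ℝ) ≤ c := le_trans hu2 hcube
    have hc0 : (0:ℝ) < c := by linarith
    have hc3 : c ^ (3:ℕ) = (n:ℝ) := by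
      rw [hc, ← Real.rpow_natCast ((n:ℝ) ^ ((1:ℝ)/3)) 3, ← Real.rpow_mul (le_of_lt hnR)]
      norm_num
    have hcc : (4:ℝ) ≤ c * c := by nlinarith
    have hncpos : (0:ℝ) < (n:ℝ) - c := by nlinarith [mul_le_mul_of_nonneg_left hcc (le_of_lt hc0)]
    set m := n - a with hm
    have hdm : d ≤ m := le_trans (Nat.le_add_right d i) hdi
    have hdn : d ≤ n := by omega
    have hmR : (m:ℝ) = (n:ℝ) - a := by
      rw [hm, Nat.cast_sub han]
    -- the descending factorial quantities
    set A := (m - d).descFactorial i with hA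
    set A' := (n - d).descFactorial i with hA'
    set B := (d + 2*i).descFactorial i with hB
    set B' := (n - d - i).descFactorial i with hB'
    set F1 := (d + i).descFactorial i with hF1
    have hA'pos : 0 < A' := aux_descFactorial_pos (by omega)
    have hB'pos : 0 < B' := aux_descFactorial_pos (by omega)
    have hBpos : 0 < B := aux_descFactorial_pos (by omega)
    have hF1pos : 0 < F1 := aux_descFactorial_pos (by omega)
    have hF1ne : (F1:ℝ) ≠ 0 := by exact_mod_cast hF1pos.ne'
    have hBne : (B:ℝ) ≠ 0 := by exact_mod_cast hBpos.ne'
    have hA'ne : (A':ℝ) ≠ 0 := by exact_mod_cast hA'pos.ne'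
    have hB'ne : (B':ℝ) ≠ 0 := by exact_mod_cast hB'pos.ne'
    have hCm0 : 0 < m.choose d := Nat.choose_pos hdm
    have hCn0 : 0 < n.choose d := Nat.choose_pos hdn
    have hCn2 : 0 < n.choose (d + 2*i) := Nat.choose_pos hd2n
    have hCm0ne : ((m.choose d : ℕ):ℝ) ≠ 0 := by exact_mod_cast hCm0.ne'
    have hCn0ne : ((n.choose d : ℕ):ℝ) ≠ 0 := by exact_mod_cast hCn0.ne'
    have hCn2ne : ((n.choose (d+2*i) : ℕ):ℝ) ≠ 0 := by exact_mod_cast hCn2.ne'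
    -- exact identities
    have e1 : (m.choose (d+i) : ℝ) * F1 = m.choose d * A := by
      exact_mod_cast congrArg (Nat.cast (R := ℝ)) (aux_choose_mul_descFactorial m d i)
    have e3 : B' * A' = (n - d).descFactorial (2*i) := by
      have h := Nat.descFactorial_mul_descFactorial (k := i) (m := 2*i) (n := n - d)
        (by omega)
      rw [show 2*i - i = i by omega] at h
      exact h
    have e4 : F1 * B = (d + 2*i).descFactorial (2*i) := by
      have h := Nat.descFactorial_mul_descFactorial (k := i) (m := 2*i) (n := d + 2*i)
        (by omega)
      rw [show 2*i - i = i by omega, show d + 2*i - i = d + i by omega] at h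
      exact h
    have e2 : (n.choose (d+2*i) : ℝ) * (F1 * B) = n.choose d * (B' * A') := by
      have h := aux_choose_mul_descFactorial n d (2*i)
      rw [← e4, ← e3] at h
      exact_mod_cast congrArg (Nat.cast (R := ℝ)) h
    have eCm : (m.choose (d+i) : ℝ) = m.choose d * A / F1 := by
      rw [eq_div_iff hF1ne]; exact e1
    have eCn : (n.choose (d+2*i) : ℝ) = n.choose d * (B' * A') / (F1 * B) := by
      rw [eq_div_iff (mul_ne_zero hF1ne hBne)]; exact e2
    have hratio : pflip n a d i / pflip n a d 0 = (a.choose i : ℝ) * A * B / (A' * B') := by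
      unfold pflip
      rw [← hm]
      simp only [Nat.add_zero, Nat.mul_zero, Nat.choose_zero_right, Nat.cast_one, mul_one]
      rw [eCm, eCn]
      field_simp
    -- bound pieces
    have hAprod : (A:ℝ) = ∏ j ∈ Finset.range i, (((m - d) - j : ℕ) : ℝ) := by
      rw [hA, Nat.descFactorial_eq_prod_range]; push_cast; rfl
    have hA'prod : (A':ℝ) = ∏ j ∈ Finset.range i, (((n - d) - j : ℕ) : ℝ) := by
      rw [hA', Nat.descFactorial_eq_prod_range]; push_cast; rfl
    have hBprod : (B:ℝ) = ∏ j ∈ Finset.range i, (((d + 2*i) - j : ℕ) : ℝ) := by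
      rw [hB, Nat.descFactorial_eq_prod_range]; push_cast; rfl
    have hB'prod : (B':ℝ) = ∏ j ∈ Finset.range i, (((n - d - i) - j : ℕ) : ℝ) := by
      rw [hB', Nat.descFactorial_eq_prod_range]; push_cast; rfl
    have hr0 : (0:ℝ) ≤ 1 - (a:ℝ)/n := by
      rw [sub_nonneg]
      exact div_le_one_of_le₀ (by exact_mod_cast han) (le_of_lt hnR)
    have step1 : (A:ℝ) ≤ (1 - (a:ℝ)/n)^i * A' := by
      rw [hAprod, hA'prod]
      calc ∏ j ∈ Finset.range i, (((m - d) - j : ℕ) : ℝ)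
          ≤ ∏ j ∈ Finset.range i, ((1 - (a:ℝ)/n) * (((n - d) - j : ℕ) : ℝ)) := by
            apply Finset.prod_le_prod (fun j _ => Nat.cast_nonneg _)
            intro j hj
            have hj' : j < i := Finset.mem_range.1 hj
            have hm1 : ((m - d - j : ℕ) : ℝ) = (n:ℝ) - ((a:ℝ) + d + j) := by
              rw [show m - d - j = n - (a + d + j) by omega, Nat.cast_sub (by omega)]
              push_cast; ring
            have hn1' : ((n - d - j : ℕ) : ℝ) = (n:ℝ) - ((d:ℝ) + j) := by
              rw [show n - d - j = n - (d + j) by omega, Nat.cast_sub (by omega)]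
              push_cast; ring
            rw [hm1, hn1', sub_mul, one_mul]
            have hjR : (0:ℝ) ≤ j := Nat.cast_nonneg j
            have hdjn : (d:ℝ) + j ≤ n := by
              have : ((d:ℝ) + j) ≤ (d:ℝ) + 2*i := by
                have : (j:ℝ) < i := by exact_mod_cast hj'
                linarith
              linarith
            have key : (a:ℝ)/n * ((n:ℝ) - ((d:ℝ) + j)) ≤ a := by
              have h1 : (a:ℝ)/n * ((n:ℝ) - ((d:ℝ) + j)) ≤ (a:ℝ)/n * n := by
                apply mul_le_mul_of_nonneg_left (by linarith) (by positivity)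
              rwa [div_mul_cancel₀ _ (ne_of_gt hnR)] at h1
            linarith
        _ = (1 - (a:ℝ)/n)^i * ∏ j ∈ Finset.range i, (((n - d) - j : ℕ) : ℝ) := by
            rw [Finset.prod_mul_distrib, Finset.prod_const, Finset.card_range]
    have step2 : (B:ℝ) ≤ (((d:ℝ) + 2*i)/((n:ℝ) - c))^i * B' := by
      rw [hBprod, hB'prod]
      calc ∏ j ∈ Finset.range i, (((d + 2*i) - j : ℕ) : ℝ)
          ≤ ∏ j ∈ Finset.range i,
              ((((d:ℝ) + 2*i)/((n:ℝ) - c)) * (((n - d - i) - j : ℕ) : ℝ)) := by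
            apply Finset.prod_le_prod (fun j _ => Nat.cast_nonneg _)
            intro j hj
            have hj' : j < i := Finset.mem_range.1 hj
            have hjR : (0:ℝ) ≤ j := Nat.cast_nonneg j
            have hjlt : (j:ℝ) < i := by exact_mod_cast hj'
            have h1 : ((d + 2*i - j : ℕ) : ℝ) = ((d:ℝ) + 2*i) - j := by
              rw [Nat.cast_sub (by omega)]; push_cast; ring
            have h2 : ((n - d - i - j : ℕ) : ℝ) = (n:ℝ) - ((d:ℝ) + i + j) := by
              rw [show n - d - i - j = n - (d + i + j) by omega, Nat.cast_sub (by omega)]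
              push_cast; ring
            rw [h1, h2]
            have h3 : (n:ℝ) - c ≤ (n:ℝ) - ((d:ℝ) + i + j) := by linarith
            calc ((d:ℝ) + 2*i) - j ≤ (d:ℝ) + 2*i := by linarith
              _ = (((d:ℝ) + 2*i)/((n:ℝ) - c)) * ((n:ℝ) - c) :=
                  (div_mul_cancel₀ _ (ne_of_gt hncpos)).symm
              _ ≤ (((d:ℝ) + 2*i)/((n:ℝ) - c)) * ((n:ℝ) - ((d:ℝ) + i + j)) := by
                  apply mul_le_mul_of_nonneg_left h3 (by positivity)
        _ = (((d:ℝ) + 2*i)/((n:ℝ) - c))^i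
              * ∏ j ∈ Finset.range i, (((n - d - i) - j : ℕ) : ℝ) := by
            rw [Finset.prod_mul_distrib, Finset.prod_const, Finset.card_range]
    have step3 : ((a.choose i : ℕ) : ℝ) ≤ (n:ℝ)^i / (i.factorial : ℝ) := by
      rw [le_div_iff₀ (by exact_mod_cast i.factorial_pos)]
      have h : i.factorial * a.choose i ≤ n ^ i :=
        le_trans (le_of_eq (Nat.descFactorial_eq_factorial_mul_choose a i).symm)
          (le_trans (Nat.descFactorial_le_pow a i) (Nat.pow_le_pow_left han i))
      calc ((a.choose i : ℕ) : ℝ) * (i.factorial : ℝ)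
          = ((i.factorial * a.choose i : ℕ) : ℝ) := by push_cast; ring
        _ ≤ ((n ^ i : ℕ) : ℝ) := by exact_mod_cast h
        _ = (n:ℝ)^i := by push_cast; rfl
    have hinv : (n:ℝ) ^ (-(1:ℝ)/3) = 1/c := by
      rw [neg_div, Real.rpow_neg (le_of_lt hnR), hc, one_div]
      norm_num
    have stepSlack : ((n:ℝ)/((n:ℝ) - c))^i ≤ Real.exp ((n:ℝ) ^ (-(1:ℝ)/3)) := by
      have hbase : (n:ℝ)/((n:ℝ) - c) ≤ Real.exp (2*c/(n:ℝ)) := by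
        have hs : c/((n:ℝ) - c) + 1 ≤ Real.exp (c/((n:ℝ) - c)) := Real.add_one_le_exp _
        have heq : (n:ℝ)/((n:ℝ) - c) = c/((n:ℝ) - c) + 1 := by
          field_simp
          ring
        have hmono : c/((n:ℝ) - c) ≤ 2*c/(n:ℝ) := by
          rw [div_le_div_iff₀ hncpos hnR]
          nlinarith [mul_le_mul_of_nonneg_left hcc (le_of_lt hc0)]
        calc (n:ℝ)/((n:ℝ) - c) = c/((n:ℝ) - c) + 1 := heq
          _ ≤ Real.exp (c/((n:ℝ) - c)) := hs
          _ ≤ Real.exp (2*c/(n:ℝ)) := Real.exp_le_exp.2 hmono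
      have hIc : (i:ℝ) * (2*c/(n:ℝ)) ≤ 1/c := by
        have hic : (i:ℝ) ≤ c/2 := by linarith
        have h1 : (i:ℝ) * (2*c/(n:ℝ)) ≤ (c/2) * (2*c/(n:ℝ)) := by
          apply mul_le_mul_of_nonneg_right hic (by positivity)
        have h2 : (c/2) * (2*c/(n:ℝ)) = 1/c := by
          rw [← hc3]; field_simp
        linarith
      calc ((n:ℝ)/((n:ℝ) - c))^i ≤ (Real.exp (2*c/(n:ℝ)))^i := by
            apply pow_le_pow_left₀ (by positivity) hbase
        _ = Real.exp ((i:ℝ) * (2*c/(n:ℝ))) := by rw [← Real.exp_nat_mul]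
        _ ≤ Real.exp (1/c) := Real.exp_le_exp.2 hIc
        _ = Real.exp ((n:ℝ) ^ (-(1:ℝ)/3)) := by rw [hinv]
    have stepFact : 1/(i.factorial : ℝ) ≤ Real.exp 1 ^ i / (i:ℝ)^i := by
      have h := Real.pow_div_factorial_le_exp (x := (i:ℝ)) (Nat.cast_nonneg i) i
      have hexp : Real.exp (i:ℝ) = Real.exp 1 ^ i := by
        rw [← Real.exp_nat_mul]; norm_num
      rw [div_le_iff₀ (by exact_mod_cast i.factorial_pos)] at h
      rw [div_le_div_iff₀ (by exact_mod_cast i.factorial_pos) (by positivity)]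
      calc 1 * (i:ℝ)^i = (i:ℝ)^i := one_mul _
        _ ≤ Real.exp (i:ℝ) * (i.factorial : ℝ) := h
        _ = Real.exp 1 ^ i * (i.factorial : ℝ) := by rw [hexp]
    have hE1 : (1:ℝ) ≤ Real.exp ((n:ℝ) ^ (-(1:ℝ)/3)) := Real.one_le_exp (by positivity)
    have hEeq : 1 + (Real.exp ((n:ℝ) ^ (-(1:ℝ)/3)) - 1) = Real.exp ((n:ℝ) ^ (-(1:ℝ)/3)) := by
      ring
    have h2di : (2:ℝ) + (d:ℝ)/i = ((d:ℝ) + 2*i)/i := by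
      field_simp
      ring
    constructor
    · -- first inequality
      rw [hratio, hEeq, h2di, div_le_iff₀ (by positivity)]
      set u : ℝ := (d:ℝ) + 2*i with hu
      set r : ℝ := 1 - (a:ℝ)/n with hr
      set E : ℝ := Real.exp ((n:ℝ) ^ (-(1:ℝ)/3)) with hEdef
      have hu0 : (0:ℝ) ≤ u := by linarith
      calc ((a.choose i : ℕ) : ℝ) * A * B
          ≤ ((n:ℝ)^i / (i.factorial : ℝ)) * (r^i * A') * ((u/((n:ℝ) - c))^i * B') := by
            apply mul_le_mul
            · apply mul_le_mul step3 step1 (Nat.cast_nonneg _)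
              positivity
            · exact step2
            · exact Nat.cast_nonneg _
            · apply mul_nonneg (by positivity)
              apply mul_nonneg (pow_nonneg hr0 _) (Nat.cast_nonneg _)
        _ = ((1/(i.factorial : ℝ)) * ((n:ℝ)/((n:ℝ) - c))^i) * (u^i * r^i) * ((A':ℝ) * B') := by
            rw [div_pow, div_pow]
            field_simp
        _ ≤ ((Real.exp 1 ^ i / (i:ℝ)^i) * E) * (u^i * r^i) * ((A':ℝ) * B') := by
            apply mul_le_mul_of_nonneg_right _ (by positivity)
            apply mul_le_mul_of_nonneg_right _
              (mul_nonneg (pow_nonneg hu0 _) (pow_nonneg hr0 _))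
            apply mul_le_mul stepFact stepSlack (by positivity) (by positivity)
        _ = E * (Real.exp 1 * (u/(i:ℝ)) * r)^i * ((A':ℝ) * B') := by
            rw [mul_pow, mul_pow, div_pow]
            field_simp
    · -- second inequality
      rw [hEeq, h2di]
      set u : ℝ := (d:ℝ) + 2*i with hu
      set r : ℝ := 1 - (a:ℝ)/n with hr
      set E : ℝ := Real.exp ((n:ℝ) ^ (-(1:ℝ)/3)) with hEdef
      have hE0 : (0:ℝ) ≤ E := le_trans zero_le_one hE1
      have hx : (0:ℝ) ≤ u/(i:ℝ) := by positivity
      have hkey : (u/(i:ℝ))^i ≤ Real.exp 1 ^ (d + i) := by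
        have h1 : u/(i:ℝ) ≤ Real.exp (1 + (d:ℝ)/i) := by
          have h2 := Real.add_one_le_exp (1 + (d:ℝ)/i)
          have h3 : u/(i:ℝ) = 2 + (d:ℝ)/i := h2di.symm
          rw [h3]; linarith
        calc (u/(i:ℝ))^i ≤ (Real.exp (1 + (d:ℝ)/i))^i := pow_le_pow_left₀ hx h1 i
          _ = Real.exp ((i:ℝ) * (1 + (d:ℝ)/i)) := by rw [← Real.exp_nat_mul]
          _ = Real.exp ((d:ℝ) + i) := by
              congr 1
              field_simp
              ring
          _ = Real.exp 1 ^ (d + i) := by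
              rw [← Real.exp_nat_mul]
              push_cast
              ring_nf
      calc E * (Real.exp 1 * (u/(i:ℝ)) * r)^i
          = E * ((u/(i:ℝ))^i * (Real.exp 1 ^ i * r^i)) := by rw [mul_pow, mul_pow]; ring
        _ ≤ E * (Real.exp 1 ^ (d + i) * (Real.exp 1 ^ i * r^i)) := by
            apply mul_le_mul_of_nonneg_left _ hE0
            apply mul_le_mul_of_nonneg_right hkey
            apply mul_nonneg (by positivity) (pow_nonneg hr0 _)
        _ = E * Real.exp 1 ^ (d + 2*i) * r^i := by
            rw [show d + 2*i = (d + i) + i by omega, pow_add]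
            ring
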